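/- In any tree T, for every leaf x of T there exists a matching in T that saturates x and all internal (non-leaf) vertices of T. -/

import Mathlib

open SimpleGraph
universe u



lemma reach_split0 {V : Type u} (G : SimpleGraph V) (y z : V) :
    ∀ {v w : V} (_ : G.Walk v w),
      (G \ fromEdgeSet {s(y,z)}).Reachable v w ∨ (G \ fromEdgeSet {s(y,z)}).Reachable v y ∨
        (G \ fromEdgeSet {s(y,z)}).Reachable v z := by
  intro v w p
  induction p with
  | nil => exact Or.inl (Reachable.refl _)
  | @cons a b _ h q ih =>
    by_cases he : s(a, b) = s(y, z)
    · rw [Sym2.eq_iff] at he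
      rcases he with ⟨rfl, rfl⟩ | ⟨rfl, rfl⟩
      · exact Or.inr (Or.inl (Reachable.refl _))
      · exact Or.inr (Or.inr (Reachable.refl _))
    · have hadj : (G \ fromEdgeSet {s(y,z)}).Adj a b := by
        simp only [sdiff_adj, fromEdgeSet_adj, Set.mem_singleton_iff]
        exact ⟨h, fun hc => he hc.1⟩
      rcases ih with h1 | h1 | h1
      · exact Or.inl (hadj.reachable.trans h1)
      · exact Or.inr (Or.inl (hadj.reachable.trans h1))
      · exact Or.inr (Or.inr (hadj.reachable.trans h1))

/-- Splitting reachability at a deleted edge. -/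
lemma reach_split {V : Type u} (G : SimpleGraph V) (y z v : V) (h : G.Reachable v y) :
    (G \ fromEdgeSet {s(y,z)}).Reachable v y ∨ (G \ fromEdgeSet {s(y,z)}).Reachable v z := by
  obtain ⟨p⟩ := h
  rcases reach_split0 G y z p with h1 | h1 | h1
  · exact Or.inl h1
  · exact Or.inl h1
  · exact Or.inr h1

/-- Walks in a subgraph-closed set lift to the induced graph. -/
lemma walk_induce {V : Type u} (H G : SimpleGraph V) (s : Set V)
    (hHG : ∀ a b, H.Adj a b → G.Adj a b)
    (hclosed : ∀ a ∈ s, ∀ b, H.Adj a b → b ∈ s) :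
    ∀ {u v : V} (_ : H.Walk u v) (hu : u ∈ s) (hv : v ∈ s),
      (G.induce s).Reachable ⟨u, hu⟩ ⟨v, hv⟩ := by
  intro u v p
  induction p with
  | nil => intro hu hv; exact Reachable.refl _
  | @cons a b _ h q ih =>
    intro hu hv
    have hb : b ∈ s := hclosed a hu b h
    have : (G.induce s).Adj ⟨a, hu⟩ ⟨b, hb⟩ := hHG a b h
    exact this.reachable.trans (ih hb hv)

/-- Induced subgraph of an acyclic graph is acyclic. -/
lemma acyclic_induce {V : Type u} (G : SimpleGraph V) (hG : G.IsAcyclic) (s : Set V) :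
    (G.induce s).IsAcyclic := by
  intro v c hc
  exact hG (c.map (Embedding.induce s : G.induce s ↪g G).toHom)
    (hc.map (Embedding.induce s : G.induce s ↪g G).injective)

/-- A finite tree with at least two vertices has a leaf. -/
lemma exists_leaf {V : Type u} [Fintype V] (G : SimpleGraph V) (hT : G.IsTree)
    (h2 : 2 ≤ Fintype.card V) : ∃ v : V, (G.neighborSet v).ncard = 1 := by
  classical
  have hpos : ∀ v : V, 0 < G.degree v := by
    intro v
    rw [G.degree_pos_iff_exists_adj]
    obtain ⟨w, hw⟩ := Fintype.exists_ne_of_one_lt_card (by omega) v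
    obtain ⟨p⟩ := hT.isConnected.preconnected v w
    cases p with
    | nil => exact absurd rfl hw.symm
    | cons h q => exact ⟨_, h⟩
  by_contra hno
  push_neg at hno
  have hdeg : ∀ v : V, 2 ≤ G.degree v := by
    intro v
    have h1 := hno v
    rw [Set.ncard_eq_toFinset_card'] at h1
    have : (G.neighborSet v).toFinset = G.neighborFinset v := by
      simp [neighborFinset_def]
    rw [this] at h1
    have := hpos v
    rw [← card_neighborFinset_eq_degree] at this ⊢
    omega
  have hsum := G.sum_degrees_eq_twice_card_edges
  have hcard := hT.card_edgeFinset
  have hge : 2 * Fintype.card V ≤ ∑ v, G.degree v := by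
    calc 2 * Fintype.card V = ∑ _v : V, 2 := by simp [mul_comm]
    _ ≤ ∑ v, G.degree v := Finset.sum_le_sum fun v _ => hdeg v
  omega

/-- Neighbor sets in induced subgraphs: full case. -/
lemma induce_nbr {V : Type u} (G : SimpleGraph V) (s : Set V) (v : V) (hv : v ∈ s)
    (hsub : G.neighborSet v ⊆ s) :
    Subtype.val '' ((G.induce s).neighborSet ⟨v, hv⟩) = G.neighborSet v := by
  ext w
  simp only [Set.mem_image, mem_neighborSet]
  constructor
  · rintro ⟨⟨w', hw'⟩, hadj, rfl⟩
    exact hadj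
  · intro h
    exact ⟨⟨w, hsub h⟩, h, rfl⟩

lemma induce_nbr_ncard {V : Type u} (G : SimpleGraph V) (s : Set V) (v : V) (hv : v ∈ s)
    (hsub : G.neighborSet v ⊆ s) :
    ((G.induce s).neighborSet ⟨v, hv⟩).ncard = (G.neighborSet v).ncard := by
  rw [← induce_nbr G s v hv hsub, Set.ncard_image_of_injective _ Subtype.val_injective]

/-- Neighbor sets in induced subgraphs: one excluded neighbor. -/
lemma induce_nbr_diff {V : Type u} (G : SimpleGraph V) (s : Set V) (v y : V) (hv : v ∈ s)
    (hy : y ∉ s) (hsub : G.neighborSet v \ {y} ⊆ s) :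
    Subtype.val '' ((G.induce s).neighborSet ⟨v, hv⟩) = G.neighborSet v \ {y} := by
  ext w
  simp only [Set.mem_image, mem_neighborSet, Set.mem_diff, Set.mem_singleton_iff]
  constructor
  · rintro ⟨⟨w', hw'⟩, hadj, rfl⟩
    exact ⟨hadj, fun h => hy (h ▸ hw')⟩
  · intro h
    exact ⟨⟨w, hsub h⟩, h.1, rfl⟩

lemma two_vertex {V : Type u} (G : SimpleGraph V) (x y : V)
    (hy : G.neighborSet x = {y}) (hyx : G.neighborSet y = {x}) :
    ∀ {v w : V} (_ : G.Walk v w), w = x ∨ w = y → v = x ∨ v = y := by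
  intro v w p
  induction p with
  | nil => exact id
  | @cons a b _ h q ih =>
    intro hw
    rcases ih hw with rfl | rfl
    · have : a ∈ G.neighborSet b := h.symm
      rw [hy] at this
      exact Or.inr this
    · have : a ∈ G.neighborSet b := h.symm
      rw [hyx] at this
      exact Or.inl this

lemma aux (n : ℕ) : ∀ {V : Type u} [Fintype V] (G : SimpleGraph V),
    Fintype.card V ≤ n → G.IsTree → ∀ x : V, (G.neighborSet x).ncard = 1 →
    ∃ M : G.Subgraph, M.IsMatching ∧ x ∈ M.verts ∧
      ∀ v : V, 2 ≤ (G.neighborSet v).ncard → v ∈ M.verts := by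
  induction n with
  | zero =>
    intro V _ G hc _ x _
    have := Fintype.card_pos_iff.mpr ⟨x⟩
    omega
  | succ n IH =>
    intro V _ G hcard hT x hx
    classical
    obtain ⟨y, hy⟩ := Set.ncard_eq_one.mp hx
    have hxy : G.Adj x y := by
      have : y ∈ G.neighborSet x := by rw [hy]; rfl
      exact this
    by_cases hcase : (G.neighborSet y).ncard ≤ 1
    · -- V = {x, y}
      have hyx : G.neighborSet y = {x} := by
        have hxmem : x ∈ G.neighborSet y := hxy.symm
        have h1 : 0 < (G.neighborSet y).ncard :=
          (Set.ncard_pos (Set.toFinite _)).mpr ⟨x, hxmem⟩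
        have h2 : (G.neighborSet y).ncard = 1 := by omega
        obtain ⟨a, ha⟩ := Set.ncard_eq_one.mp h2
        rw [ha] at hxmem ⊢
        rw [Set.mem_singleton_iff] at hxmem
        rw [hxmem]
      refine ⟨G.subgraphOfAdj hxy, Subgraph.IsMatching.subgraphOfAdj hxy, by simp, ?_⟩
      intro v hv
      obtain ⟨p⟩ := hT.isConnected.preconnected v x
      rcases two_vertex G x y hy hyx p (Or.inl rfl) with rfl | rfl
      · rw [hx] at hv; omega
      · rw [hyx, Set.ncard_singleton] at hv; omega
    · push_neg at hcase
      obtain ⟨z, hzmem, hzx⟩ := Set.exists_ne_of_one_lt_ncard hcase x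
      have hyz : G.Adj y z := hzmem
      set G' := G \ fromEdgeSet {s(y, z)} with hG'
      have hG'le : ∀ a b, G'.Adj a b → G.Adj a b := fun a b h => h.1
      have hbridge : ¬ G'.Reachable y z := by
        have hb := (isAcyclic_iff_forall_adj_isBridge.mp hT.IsAcyclic) hyz
        exact isBridge_iff.mp hb
      set Cy : Set V := {v | G'.Reachable v y} with hCydef
      set Cz : Set V := {v | G'.Reachable v z} with hCzdef
      have hyCy : y ∈ Cy := Reachable.refl _
      have hzCz : z ∈ Cz := Reachable.refl _
      have hdisj : ∀ v, v ∈ Cy → v ∈ Cz → False := fun v h1 h2 =>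
        hbridge (h1.symm.trans h2)
      have hcover : ∀ v : V, v ∈ Cy ∨ v ∈ Cz := fun v =>
        reach_split G y z v (hT.isConnected.preconnected v y)
      have hzCy : z ∉ Cy := fun h => hdisj z h hzCz
      have hyCz : y ∉ Cz := fun h => hdisj y hyCy h
      have hclosedy : ∀ a ∈ Cy, ∀ b, G'.Adj a b → b ∈ Cy :=
        fun a ha b h => h.symm.reachable.trans ha
      have hclosedz : ∀ a ∈ Cz, ∀ b, G'.Adj a b → b ∈ Cz :=
        fun a ha b h => h.symm.reachable.trans ha
      have hedgey : ∀ a ∈ Cy, ∀ b, a ≠ y → G.Adj a b → G'.Adj a b := by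
        intro a ha b hay h
        refine ⟨h, ?_⟩
        simp only [fromEdgeSet_adj, Set.mem_singleton_iff, Sym2.eq_iff]
        rintro ⟨⟨rfl, rfl⟩ | ⟨rfl, rfl⟩, -⟩
        · exact hay rfl
        · exact hzCy ha
      have hedgez : ∀ a ∈ Cz, ∀ b, a ≠ z → G.Adj a b → G'.Adj a b := by
        intro a ha b haz h
        refine ⟨h, ?_⟩
        simp only [fromEdgeSet_adj, Set.mem_singleton_iff, Sym2.eq_iff]
        rintro ⟨⟨rfl, rfl⟩ | ⟨rfl, rfl⟩, -⟩
        · exact hyCz ha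
        · exact haz rfl
      have hnbry : ∀ v ∈ Cy, v ≠ y → G.neighborSet v ⊆ Cy := by
        intro v hv hvy w hw
        exact hclosedy v hv w (hedgey v hv w hvy hw)
      have hnbrz : ∀ v ∈ Cz, v ≠ z → G.neighborSet v ⊆ Cz := by
        intro v hv hvz w hw
        exact hclosedz v hv w (hedgez v hv w hvz hw)
      have hnbrz' : G.neighborSet z \ {y} ⊆ Cz := by
        rintro w ⟨hw, hwy⟩
        simp only [Set.mem_singleton_iff] at hwy
        refine hclosedz z hzCz w ⟨hw, ?_⟩
        simp only [fromEdgeSet_adj, Set.mem_singleton_iff, Sym2.eq_iff]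
        rintro ⟨⟨h1, rfl⟩ | ⟨-, rfl⟩, -⟩
        · exact G.loopless.irrefl _ hw
        · exact hwy rfl
      have hxCy : x ∈ Cy := by
        refine hclosedy y hyCy x ⟨hxy.symm, ?_⟩
        simp only [fromEdgeSet_adj, Set.mem_singleton_iff, Sym2.eq_iff]
        rintro ⟨⟨-, hxz⟩ | ⟨hyz', -⟩, -⟩
        · exact hzx hxz.symm
        · exact hyz.ne hyz'
      have hxCz : x ∉ Cz := fun h => hdisj x hxCy h
      -- the Cy side tree
      have htreey : (G.induce Cy).IsTree := by
        refine ⟨?_, acyclic_induce G hT.IsAcyclic Cy⟩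
        rw [connected_iff]
        refine ⟨?_, ⟨⟨y, hyCy⟩⟩⟩
        rintro ⟨u, hu⟩ ⟨v, hv⟩
        obtain ⟨p⟩ := Reachable.trans (hu : G'.Reachable u y) (hv : G'.Reachable v y).symm
        exact walk_induce G' G Cy hG'le hclosedy p hu hv
      have hcardy : Fintype.card Cy ≤ n := by
        have h1 : Fintype.card Cy < Fintype.card V :=
          Fintype.card_subtype_lt (p := fun v => v ∈ Cy) hzCy
        omega
      have hleafx : ((G.induce Cy).neighborSet ⟨x, hxCy⟩).ncard = 1 := by
        rw [induce_nbr_ncard G Cy x hxCy (by rw [hy]; simp [hyCy])]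
        exact hx
      obtain ⟨M1', hM1m, hM1x, hM1cov⟩ := IH (G.induce Cy) hcardy htreey ⟨x, hxCy⟩ hleafx
      set f : G.induce Cy ↪g G := Embedding.induce Cy with hf
      set M1 : G.Subgraph := M1'.map f.toHom with hM1def
      have hM1 : M1.IsMatching := hM1m.map f.toHom f.injective
      have hM1verts : ∀ a : Cy, a ∈ M1'.verts → (a : V) ∈ M1.verts := by
        intro a ha
        exact ⟨a, ha, rfl⟩
      have hM1sub : M1.verts ⊆ Cy := by
        rintro a ⟨⟨w, hw⟩, hmem, rfl⟩
        exact hw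
      have hxM1 : x ∈ M1.verts := hM1verts ⟨x, hxCy⟩ hM1x
      have hcovy : ∀ v, v ∈ Cy → 2 ≤ (G.neighborSet v).ncard → v ∈ M1.verts := by
        intro v hv h2
        by_cases hvy : v = y
        · rw [hvy]
          obtain ⟨w, hw, -⟩ := hM1m hM1x
          have hadj : G.Adj x (w : V) := M1'.adj_sub hw
          have hwy : (w : V) = y := by
            have hmem : (w : V) ∈ G.neighborSet x := hadj
            rw [hy] at hmem
            exact hmem
          have hwv : (⟨y, hyCy⟩ : Cy) ∈ M1'.verts := by
            have := M1'.edge_vert hw.symm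
            rwa [show w = (⟨y, hyCy⟩ : Cy) from Subtype.ext hwy] at this
          exact hM1verts _ hwv
        · have hsub := hnbry v hv hvy
          have h2' : 2 ≤ ((G.induce Cy).neighborSet ⟨v, hv⟩).ncard := by
            rw [induce_nbr_ncard G Cy v hv hsub]
            exact h2
          exact hM1verts _ (hM1cov ⟨v, hv⟩ h2')
      by_cases hzdeg : (G.neighborSet z).ncard ≤ 1
      · -- z is a leaf of G; Cz = {z}
        have hzy : G.neighborSet z = {y} := by
          have hymem : y ∈ G.neighborSet z := hyz.symm
          have h1 : 0 < (G.neighborSet z).ncard :=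
            (Set.ncard_pos (Set.toFinite _)).mpr ⟨y, hymem⟩
          have h2 : (G.neighborSet z).ncard = 1 := by omega
          obtain ⟨a, ha⟩ := Set.ncard_eq_one.mp h2
          rw [ha] at hymem ⊢
          rw [Set.mem_singleton_iff] at hymem
          rw [hymem]
        refine ⟨M1, hM1, hxM1, ?_⟩
        intro v h2
        rcases hcover v with hv | hv
        · exact hcovy v hv h2
        · exfalso
          have hvz : v = z := by
            obtain ⟨p⟩ := (hv : G'.Reachable v z).symm
            cases p with
            | nil => rfl
            | @cons _ c _ h q =>
              exfalso
              have hc : c = y := by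
                have hmc : c ∈ G.neighborSet z := ((hG'le _ _ h).symm : G.Adj c z).symm
                rw [hzy] at hmc
                exact hmc
              rw [hc] at h
              exact h.2 (by
                simp only [fromEdgeSet_adj, Set.mem_singleton_iff]
                exact ⟨Sym2.eq_swap, hyz.ne.symm⟩)
          rw [hvz, hzy, Set.ncard_singleton] at h2
          omega
      · push_neg at hzdeg
        -- the Cz side tree
        have htreez : (G.induce Cz).IsTree := by
          refine ⟨?_, acyclic_induce G hT.IsAcyclic Cz⟩
          rw [connected_iff]
          refine ⟨?_, ⟨⟨z, hzCz⟩⟩⟩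
          rintro ⟨u, hu⟩ ⟨v, hv⟩
          obtain ⟨p⟩ := Reachable.trans (hu : G'.Reachable u z) (hv : G'.Reachable v z).symm
          exact walk_induce G' G Cz hG'le hclosedz p hu hv
        have hcardz : Fintype.card Cz ≤ n := by
          have h1 : Fintype.card Cz < Fintype.card V :=
            Fintype.card_subtype_lt (p := fun v => v ∈ Cz) hxCz
          omega
        have hymemz : y ∈ G.neighborSet z := by rw [mem_neighborSet]; exact hyz.symm
        have hzncard : ((G.induce Cz).neighborSet ⟨z, hzCz⟩).ncard =
            (G.neighborSet z).ncard - 1 := by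
          rw [← Set.ncard_image_of_injective _ Subtype.val_injective,
            induce_nbr_diff G Cz z y hzCz hyCz hnbrz',
            Set.ncard_diff_singleton_of_mem hymemz]
        obtain ⟨M2', hM2m, hM2z, hM2cov⟩ :
            ∃ M2' : (G.induce Cz).Subgraph, M2'.IsMatching ∧ (⟨z, hzCz⟩ : Cz) ∈ M2'.verts ∧
              ∀ v : Cz, 2 ≤ ((G.induce Cz).neighborSet v).ncard → v ∈ M2'.verts := by
          by_cases hz2 : (G.neighborSet z).ncard = 2
          · have hleafz : ((G.induce Cz).neighborSet ⟨z, hzCz⟩).ncard = 1 := by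
              rw [hzncard, hz2]
            obtain ⟨M2', h1, h2, h3⟩ := IH (G.induce Cz) hcardz htreez ⟨z, hzCz⟩ hleafz
            exact ⟨M2', h1, h2, h3⟩
          · have hz3 : 2 ≤ ((G.induce Cz).neighborSet ⟨z, hzCz⟩).ncard := by
              rw [hzncard]; omega
            have hcard2 : 2 ≤ Fintype.card Cz := by
              obtain ⟨w, hw⟩ : ((G.induce Cz).neighborSet ⟨z, hzCz⟩).Nonempty := by
                rw [← Set.ncard_pos (Set.toFinite _)]; omega
              have hne : w ≠ ⟨z, hzCz⟩ := fun h => (G.induce Cz).loopless.irrefl _ (h ▸ hw)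
              exact Fintype.one_lt_card_iff.mpr ⟨w, ⟨z, hzCz⟩, hne⟩
            obtain ⟨x', hx'⟩ := exists_leaf (G.induce Cz) htreez hcard2
            obtain ⟨M2', h1, h2, h3⟩ := IH (G.induce Cz) hcardz htreez x' hx'
            exact ⟨M2', h1, h3 _ hz3, h3⟩
        set g : G.induce Cz ↪g G := Embedding.induce Cz with hg
        set M2 : G.Subgraph := M2'.map g.toHom with hM2def
        have hM2 : M2.IsMatching := hM2m.map g.toHom g.injective
        have hM2verts : ∀ a : Cz, a ∈ M2'.verts → (a : V) ∈ M2.verts := by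
          intro a ha
          exact ⟨a, ha, rfl⟩
        have hM2sub : M2.verts ⊆ Cz := by
          rintro a ⟨⟨w, hw⟩, hmem, rfl⟩
          exact hw
        have hd : Disjoint M1.support M2.support := by
          rw [hM1.support_eq_verts, hM2.support_eq_verts, Set.disjoint_left]
          intro a ha1 ha2
          exact hdisj a (hM1sub ha1) (hM2sub ha2)
        refine ⟨M1 ⊔ M2, hM1.sup hM2 hd, Set.mem_union_left _ hxM1, ?_⟩
        intro v h2
        rcases hcover v with hv | hv
        · exact Set.mem_union_left _ (hcovy v hv h2)
        · refine Set.mem_union_right _ ?_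
          by_cases hvz : v = z
          · subst hvz
            exact hM2verts _ hM2z
          · have hsub := hnbrz v hv hvz
            have h2' : 2 ≤ ((G.induce Cz).neighborSet ⟨v, hv⟩).ncard := by
              rw [induce_nbr_ncard G Cz v hv hsub]
              exact h2
            exact hM2verts _ (hM2cov ⟨v, hv⟩ h2')

/-- In any tree `T`, for every leaf `x` there is a matching saturating `x`
and all internal (non-leaf) vertices. -/
theorem stmt_0 {V : Type*} [Fintype V] (G : SimpleGraph V) [DecidableRel G.Adj]
    (hT : G.IsTree) (x : V) (hx : G.degree x = 1) :
    ∃ M : G.Subgraph, M.IsMatching ∧ x ∈ M.verts ∧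
      ∀ v : V, 2 ≤ G.degree v → v ∈ M.verts := by
  have hdeg : ∀ v : V, G.degree v = (G.neighborSet v).ncard := by
    intro v
    rw [Set.ncard_eq_toFinset_card', ← G.card_neighborFinset_eq_degree, neighborFinset_def]
  obtain ⟨M, hM, hxM, hcov⟩ := aux (Fintype.card V) G le_rfl hT x (by rw [← hdeg]; exact hx)
  exact ⟨M, hM, hxM, fun v hv => hcov v (by rw [← hdeg]; exact hv)⟩
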